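/- The holomorphic curve φ(z) = (i(2z² + 2iz - 1)/2, (2iz - 1)/2, z² + iz) satisfies φ₁² + φ₂² + φ₃² = 0, and the associated conformal metric factor (|z|² + |z + 2i|²)/2 is bounded below by |z|²/2; consequently every divergent path γ : [0, ∞) → ℂ with |γ(t)| → ∞ has infinite length ∫ (|γ(t)|² + |γ(t) + 2i|²)/2 · |γ'(t)| dt = ∞. -/

import Mathlib

open Complex MeasureTheory

/-- The isotropic curve `φ(z) = (i(2z² + 2iz - 1)/2, (2iz - 1)/2, z² + iz)`
of the dual surface of the parabolic catenoid satisfies the Euclidean isotropy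
relation, its conformal metric factor `(|z|² + |z + 2i|²)/2` is bounded below
by `|z|²/2`, and consequently every divergent path has infinite length, so the
surface is complete. -/
theorem dual_parabolic_catenoid_complete :
    (∀ z : ℂ,
      (I * (2 * z ^ 2 + 2 * I * z - 1) / 2) ^ 2
        + ((2 * I * z - 1) / 2) ^ 2 + (z ^ 2 + I * z) ^ 2 = 0) ∧
    (∀ z : ℂ, ‖z‖ ^ 2 / 2
        ≤ (‖z‖ ^ 2 + ‖z + 2 * I‖ ^ 2) / 2) ∧
    (∀ γ : ℝ → ℂ, Differentiable ℝ γ →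
      Filter.Tendsto (fun t => ‖γ t‖) Filter.atTop Filter.atTop →
      ∫⁻ t in Set.Ici (0 : ℝ),
        ENNReal.ofReal
          ((‖γ t‖ ^ 2 + ‖γ t + 2 * I‖ ^ 2) / 2
            * ‖deriv γ t‖) = ⊤) := by
  refine ⟨?_, ?_, ?_⟩
  · intro z
    linear_combination (z ^ 4 + I ^ 2 * z ^ 2 + 2 * I * z ^ 3 - I * z + 1 / 4) * Complex.I_sq
  · intro z
    nlinarith [sq_nonneg (‖z + 2 * I‖)]
  · intro γ hγ htend
    by_contra hne
    set g : ℝ → ℝ := fun t =>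
      (‖γ t‖ ^ 2 + ‖γ t + 2 * I‖ ^ 2) / 2
        * ‖deriv γ t‖ with hgdef
    set L : ENNReal := ∫⁻ t in Set.Ici (0 : ℝ), ENNReal.ofReal (g t) with hLdef
    have hγc : Continuous γ := hγ.continuous
    have hmd : Measurable (deriv γ) := measurable_deriv γ
    have h1m : Measurable fun t => ‖γ t‖ :=
      (continuous_norm.comp hγc).measurable
    have h2m : Measurable fun t => ‖γ t + 2 * I‖ :=
      (continuous_norm.comp (hγc.add continuous_const)).measurable
    have h3m : Measurable fun t => ‖deriv γ t‖ :=
      continuous_norm.measurable.comp hmd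
    have hgm : Measurable g := (((h1m.pow_const 2).add (h2m.pow_const 2)).div_const 2).mul h3m
    -- choose T
    obtain ⟨T₀, hT₀⟩ := Filter.eventually_atTop.mp (htend.eventually_ge_atTop 4)
    set T : ℝ := max T₀ 0 with hTdef
    have hT0 : (0 : ℝ) ≤ T := le_max_right _ _
    have hT4 : ∀ t, T ≤ t → 4 ≤ ‖γ t‖ := fun t ht =>
      hT₀ t (le_trans (le_max_left _ _) ht)
    set D : ℝ → ℝ := fun t =>
      2 * ((γ t).re * (deriv γ t).re + (γ t).im * (deriv γ t).im) with hDdef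
    set H : ℝ → ℝ := fun t => ‖γ t‖ ^ 2 with hHdef
    have hH : ∀ t : ℝ, HasDerivAt H (D t) t := by
      intro t
      have h := (hγ t).hasDerivAt
      have hre : HasDerivAt (fun s => (γ s).re) (deriv γ t).re t :=
        Complex.reCLM.hasFDerivAt.comp_hasDerivAt t h
      have him : HasDerivAt (fun s => (γ s).im) (deriv γ t).im t :=
        Complex.imCLM.hasFDerivAt.comp_hasDerivAt t h
      have key : HasDerivAt (fun s => (γ s).re * (γ s).re + (γ s).im * (γ s).im) (D t) t := by
        have h2 : HasDerivAt (fun s => (γ s).re * (γ s).re + (γ s).im * (γ s).im) _ t := (hre.mul hre).add (him.mul him)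
        convert h2 using 1
        simp only [hDdef]; ring
      have hfun : H = fun s => (γ s).re * (γ s).re + (γ s).im * (γ s).im := by
        funext s
        simp only [hHdef, Complex.sq_norm, Complex.normSq_apply]
      rw [hfun]; exact key
    have hDmeas : Measurable D := by
      apply Measurable.const_mul
      exact ((Complex.measurable_re.comp hγc.measurable).mul
          (Complex.measurable_re.comp hmd)).add
        ((Complex.measurable_im.comp hγc.measurable).mul
          (Complex.measurable_im.comp hmd))
    have hDg : ∀ t, T ≤ t → |D t| ≤ g t := by
      intro t ht
      have h4 := hT4 t ht
      have hA : ‖γ t‖ ^ 2 = (γ t).re ^ 2 + (γ t).im ^ 2 := by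
        rw [Complex.sq_norm, Complex.normSq_apply]; ring
      have hB : ‖deriv γ t‖ ^ 2 = (deriv γ t).re ^ 2 + (deriv γ t).im ^ 2 := by
        rw [Complex.sq_norm, Complex.normSq_apply]; ring
      have hAn : 0 ≤ ‖γ t‖ := norm_nonneg _
      have hBn : 0 ≤ ‖deriv γ t‖ := norm_nonneg _
      have hCn : 0 ≤ ‖γ t + 2 * I‖ ^ 2 := sq_nonneg _
      have hAB : (‖γ t‖ * ‖deriv γ t‖) ^ 2
          = ((γ t).re ^ 2 + (γ t).im ^ 2) * ((deriv γ t).re ^ 2 + (deriv γ t).im ^ 2) := by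
        rw [mul_pow, hA, hB]
      have cauchy : |D t| ≤ 2 * ‖γ t‖ * ‖deriv γ t‖ := by
        rw [abs_le]
        constructor <;>
        · simp only [hDdef]
          nlinarith [hAB, mul_nonneg hAn hBn,
            sq_nonneg ((γ t).re * (deriv γ t).im - (γ t).im * (deriv γ t).re),
            sq_nonneg ((γ t).re * (deriv γ t).im + (γ t).im * (deriv γ t).re),
            sq_nonneg (‖γ t‖ * ‖deriv γ t‖
              - ((γ t).re * (deriv γ t).re + (γ t).im * (deriv γ t).im)),
            sq_nonneg (‖γ t‖ * ‖deriv γ t‖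
              + ((γ t).re * (deriv γ t).re + (γ t).im * (deriv γ t).im))]
      have step : 2 * ‖γ t‖ * ‖deriv γ t‖ ≤ g t := by
        simp only [hgdef]
        nlinarith [mul_nonneg (mul_nonneg hAn (by linarith : (0:ℝ) ≤ ‖γ t‖ - 4)) hBn,
          mul_nonneg hCn hBn]
      linarith
    -- key boundedness
    have key : ∀ s, T ≤ s → H s ≤ H T + L.toReal := by
      intro s hs
      have hsub : Set.Ioc T s ⊆ Set.Ici (0 : ℝ) := fun x hx => le_trans hT0 (le_of_lt hx.1)
      have hlin : (∫⁻ t in Set.Ioc T s, ENNReal.ofReal ‖D t‖) ≤ L := by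
        calc (∫⁻ t in Set.Ioc T s, ENNReal.ofReal ‖D t‖)
            ≤ ∫⁻ t in Set.Ioc T s, ENNReal.ofReal (g t) := by
              refine setLIntegral_mono (hgm.ennreal_ofReal) fun t htm => ?_
              exact ENNReal.ofReal_le_ofReal (by simpa [Real.norm_eq_abs] using hDg t (le_of_lt htm.1))
          _ ≤ L := lintegral_mono_set hsub
      have hlt : (∫⁻ t in Set.Ioc T s, ENNReal.ofReal ‖D t‖) < ⊤ :=
        lt_of_le_of_lt hlin (lt_top_iff_ne_top.2 hne)
      have hDint : IntegrableOn D (Set.Ioc T s) := by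
        refine ⟨hDmeas.aestronglyMeasurable.restrict, ?_⟩
        rwa [hasFiniteIntegral_iff_norm]
      have hTs : IntervalIntegrable D volume T s :=
        (intervalIntegrable_iff_integrableOn_Ioc_of_le hs).2 hDint
      have hftc : ∫ t in T..s, D t = H s - H T :=
        intervalIntegral.integral_eq_sub_of_hasDerivAt (fun t _ => hH t) hTs
      have heq : ∫ t in T..s, D t = ∫ t in Set.Ioc T s, D t :=
        intervalIntegral.integral_of_le hs
      have h2 : ‖∫ t in Set.Ioc T s, D t‖
          ≤ (∫⁻ t in Set.Ioc T s, ENNReal.ofReal ‖D t‖).toReal :=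
        norm_integral_le_lintegral_norm D
      have h3 : (∫⁻ t in Set.Ioc T s, ENNReal.ofReal ‖D t‖).toReal ≤ L.toReal :=
        ENNReal.toReal_mono hne hlin
      have h4 : H s - H T ≤ ‖∫ t in Set.Ioc T s, D t‖ := by
        rw [← heq, hftc, Real.norm_eq_abs]
        exact le_abs_self _
      linarith
    -- contradiction
    obtain ⟨s, hs1, hs2⟩ :=
      ((htend.eventually_ge_atTop (|H T + L.toReal| + 1)).and
        (Filter.eventually_ge_atTop T)).exists
    have hHs : H s = ‖γ s‖ ^ 2 := rfl
    have := key s hs2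
    nlinarith [abs_nonneg (H T + L.toReal), le_abs_self (H T + L.toReal), hs1,
      sq_nonneg (|H T + L.toReal|)]
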